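/- Let H be a complex Hilbert space, let q and c be real numbers with 0 < q < 1 and c ≥ 0, and let X and Y be bounded operators on H with Y self-adjoint, ker Y = {0}, and X*X − q²XX* = (1 − q²)(Y² + c·1). Then ker X = {0}. -/

import Mathlib

open ContinuousLinearMap
open scoped InnerProductSpace

/-- Let `0 < q < 1`, `c ≥ 0`, and let `X, Y` be bounded operators on a complex Hilbert
space `H` with `Y` self-adjoint, `ker Y = {0}` and
`X*X − q² X X* = (1 − q²)(Y² + c·1)`.  Then `ker X = {0}`. -/
theorem ker_X_trivial
    {H : Type*} [NormedAddCommGroup H] [InnerProductSpace ℂ H] [CompleteSpace H]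
    (q c : ℝ) (hq0 : 0 < q) (hq1 : q < 1) (hc : 0 ≤ c)
    (X Y : H →L[ℂ] H) (hY : IsSelfAdjoint Y) (hkerY : LinearMap.ker (Y : H →ₗ[ℂ] H) = ⊥)
    (hrel : adjoint X ∘L X - ((q : ℂ) ^ 2) • (X ∘L adjoint X)
      = ((1 : ℂ) - (q : ℂ) ^ 2) • (Y ∘L Y + (c : ℂ) • (1 : H →L[ℂ] H))) :
    LinearMap.ker (X : H →ₗ[ℂ] H) = ⊥ := by
  rw [Submodule.eq_bot_iff]
  intro x hx
  have hXx : X x = 0 := hx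
  have h := congrArg (fun T : H →L[ℂ] H => ⟪T x, x⟫_ℂ) hrel
  simp only [sub_apply, smul_apply, comp_apply, add_apply, one_apply, ContinuousLinearMap.one_apply, hXx, map_zero,
    inner_sub_left, inner_smul_left, inner_add_left] at h
  have hL : ⟪X (adjoint X x), x⟫_ℂ = (‖adjoint X x‖ : ℂ) ^ 2 := by
    rw [← adjoint_inner_right, inner_self_eq_norm_sq_to_K]; norm_cast
  have hY1 : ⟪Y (Y x), x⟫_ℂ = (‖Y x‖ : ℂ) ^ 2 := by
    rw [← adjoint_inner_right, hY.adjoint_eq, inner_self_eq_norm_sq_to_K]; norm_cast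
  have hcx : ⟪x, x⟫_ℂ = (‖x‖ : ℂ) ^ 2 := by
    rw [inner_self_eq_norm_sq_to_K]; norm_cast
  rw [hL, hY1, hcx] at h
  simp only [inner_zero_left, map_sub, map_one, map_pow, Complex.conj_ofReal, zero_sub] at h
  have key : -(q ^ 2 * ‖adjoint X x‖ ^ 2) = (1 - q ^ 2) * (‖Y x‖ ^ 2 + c * ‖x‖ ^ 2) := by
    have h' : ((-(q ^ 2 * ‖adjoint X x‖ ^ 2) : ℝ) : ℂ)
        = (((1 - q ^ 2) * (‖Y x‖ ^ 2 + c * ‖x‖ ^ 2) : ℝ) : ℂ) := by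
      push_cast
      linear_combination h
    exact_mod_cast h'
  have h1 : (1 - q ^ 2) > 0 := by nlinarith
  have hYx : Y x = 0 := by
    have hnn : 0 ≤ ‖Y x‖ ^ 2 := sq_nonneg _
    have hnn2 : 0 ≤ c * ‖x‖ ^ 2 := mul_nonneg hc (sq_nonneg _)
    have hnn3 : 0 ≤ q ^ 2 * ‖adjoint X x‖ ^ 2 := by positivity
    have : ‖Y x‖ ^ 2 = 0 := by nlinarith
    have := pow_eq_zero_iff (n := 2) (by norm_num) |>.mp this
    exact norm_eq_zero.mp this
  have : x ∈ LinearMap.ker (Y : H →ₗ[ℂ] H) := hYx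
  rwa [hkerY, Submodule.mem_bot] at this
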